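/- Fix integers k, m ≥ 1, let λ = 1/2, and fix ε > 0. There exists n₀ such that for all n ≥ n₀ the following holds: let Σ = (a_1, …, a_n) be a sequence in ℤ^k with every entry in [0, M]^k such that e^m_Σ(A₁) ≠ e^m_Σ(A₂) for all distinct A₁, A₂ ∈ F_{1/2,n} with |A₁|, |A₂| ≥ m. Let A be uniform on F_{1/2,n}, X = e^m_Σ(A) ∈ ℤ^k, μ = E[X], and σ² = E[‖X − μ‖²]. Then σ² ≤ (1 + ε) · k(2^{2m+1}·(1/2)^{2m−1} + 2^{2m+1}·(1/2)^{2m} + 1) · n^{2m−1} · M^{2m} / (2^{2m} · ((m−1)!)²). -/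

import Mathlib

set_option maxHeartbeats 1000000

/-- `Fam n l` is the family `F_{λ,n}` of all subsets of `{1,…,n}` of size at most `λ·n`. -/
noncomputable def Fam (n : ℕ) (l : ℝ) : Finset (Finset (Fin n)) :=
  Finset.univ.filter (fun A => (A.card : ℝ) ≤ l * n)

/-- The `m`-th evaluation of the sequence `a` in `ℤ^k` on the subset `A`
(componentwise products); it is `0` when `|A| < m`. -/
def mthEvalVec (n k m : ℕ) (a : Fin n → Fin k → ℤ) (A : Finset (Fin n)) : Fin k → ℤ :=
  fun j => ∑ S ∈ A.powersetCard m, ∏ i ∈ S, a i j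

section Aux
open Finset

-- mean minimizes sum of squares
lemma aux_mean_min {α : Type*} (s : Finset α) (f : α → ℝ) (c : ℝ) :
    ∑ x ∈ s, (f x - (∑ y ∈ s, f y) / s.card) ^ 2 ≤ ∑ x ∈ s, (f x - c) ^ 2 := by
  rcases s.eq_empty_or_nonempty with h | h
  · simp [h]
  set μ := (∑ y ∈ s, f y) / s.card with hμdef
  have hcard : (0:ℝ) < s.card := by exact_mod_cast Finset.card_pos.2 h
  have hsum : ∑ y ∈ s, f y = s.card * μ := by rw [hμdef]; field_simp [hcard.ne']
  have key : ∑ x ∈ s, (f x - c)^2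
      = ∑ x ∈ s, (f x - μ)^2 + ((2*(μ-c)) * (∑ y ∈ s, f y) - (s.card : ℝ) * ((μ-c)*(μ+c))) := by
    have h1 : ∀ x ∈ s, (f x - c)^2 = (f x - μ)^2 + ((2*(μ-c)) * f x - (μ-c)*(μ+c)) := by
      intros; ring
    rw [Finset.sum_congr rfl h1, Finset.sum_add_distrib, Finset.sum_sub_distrib, ← Finset.mul_sum,
      Finset.sum_const, nsmul_eq_mul]
  rw [key, hsum]
  nlinarith [sq_nonneg (μ - c), hcard]

-- superset count
lemma aux_card_superset {n : ℕ} (B : Finset (Fin n)) :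
    ((Finset.univ : Finset (Finset (Fin n))).filter (fun A => B ⊆ A)).card = 2 ^ (n - B.card) := by
  have h : (Finset.univ : Finset (Finset (Fin n))).filter (fun A => B ⊆ A) = Finset.Icc B Finset.univ := by
    ext A; simp [Finset.mem_Icc]
  rw [h, Finset.card_Icc_finset (Finset.subset_univ B)]
  simp

lemma aux_sum_ind {n : ℕ} (B : Finset (Fin n)) :
    ∑ A : Finset (Fin n), (if B ⊆ A then (1:ℝ) else 0) = 2 ^ (n - B.card) := by
  rw [Finset.sum_boole, aux_card_superset]
  push_cast; ring


-- number of m-subsets containing a fixed point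
lemma aux_count_one (x : Fin n) :
    (((Finset.univ : Finset (Fin n)).powersetCard m).filter (fun S => x ∈ S)).card
      ≤ (n-1).choose (m-1) := by
  have h := Finset.card_le_card_of_injOn (f := fun S => S.erase x)
    (t := (Finset.univ.erase x).powersetCard (m-1)) (s := ((Finset.univ : Finset (Fin n)).powersetCard m).filter (fun S => x ∈ S))
    ?_ ?_
  · refine h.trans ?_
    rw [Finset.card_powersetCard, Finset.card_erase_of_mem (Finset.mem_univ x), Finset.card_univ,
      Fintype.card_fin]
  · intro S hS
    simp only [Finset.mem_coe, Finset.mem_filter, Finset.mem_powersetCard_univ] at hS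
    rw [Finset.mem_coe, Finset.mem_powersetCard]
    exact ⟨Finset.erase_subset_erase x (Finset.subset_univ S),
      by rw [Finset.card_erase_of_mem hS.2, hS.1]⟩
  · intro S hS T hT hST
    simp only [Finset.coe_filter, Set.mem_setOf_eq] at hS hT
    exact Finset.erase_injOn' x hS.2 hT.2 hST

-- number of m-subsets containing two fixed points
lemma aux_count_two (x y : Fin n) (hxy : x ≠ y) (hm : 2 ≤ m) :
    (((Finset.univ : Finset (Fin n)).powersetCard m).filter (fun S => x ∈ S ∧ y ∈ S)).card
      ≤ (n-2).choose (m-2) := by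
  have h := Finset.card_le_card_of_injOn (f := fun S => (S.erase x).erase y)
    (t := ((Finset.univ.erase x).erase y).powersetCard (m-2))
    (s := ((Finset.univ : Finset (Fin n)).powersetCard m).filter (fun S => x ∈ S ∧ y ∈ S))
    ?_ ?_
  · refine h.trans ?_
    rw [Finset.card_powersetCard, Finset.card_erase_of_mem, Finset.card_erase_of_mem (Finset.mem_univ x),
      Finset.card_univ, Fintype.card_fin]
    · exact Nat.choose_le_choose _ (by omega)
    · exact Finset.mem_erase.2 ⟨hxy.symm, Finset.mem_univ y⟩
  · intro S hS
    simp only [Finset.mem_coe, Finset.mem_filter, Finset.mem_powersetCard_univ] at hS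
    rw [Finset.mem_coe, Finset.mem_powersetCard]
    have hy : y ∈ S.erase x := Finset.mem_erase.2 ⟨hxy.symm, hS.2.2⟩
    refine ⟨Finset.erase_subset_erase y (Finset.erase_subset_erase x (Finset.subset_univ S)), ?_⟩
    rw [Finset.card_erase_of_mem hy, Finset.card_erase_of_mem hS.2.1, hS.1]
    omega
  · intro S hS T hT hST
    simp only [Finset.coe_filter, Set.mem_setOf_eq] at hS hT
    have h1 : S.erase x = T.erase x := by
      refine Finset.erase_injOn' y ?_ ?_ hST
      · exact Finset.mem_erase.2 ⟨hxy.symm, hS.2.2⟩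
      · exact Finset.mem_erase.2 ⟨hxy.symm, hT.2.2⟩
    exact Finset.erase_injOn' x hS.2.1 hT.2.1 h1

-- no m-subset contains two distinct points when m = 1
lemma aux_count_two_m1 (x y : Fin n) (hxy : x ≠ y) (hm : m = 1) :
    (((Finset.univ : Finset (Fin n)).powersetCard m).filter (fun S => x ∈ S ∧ y ∈ S)).card = 0 := by
  rw [Finset.card_eq_zero, Finset.filter_eq_empty_iff]
  intro S hS
  rw [Finset.mem_powersetCard_univ, hm] at hS
  rintro ⟨hx, hy⟩
  have : 1 < S.card := Finset.one_lt_card.2 ⟨x, hx, y, hy, hxy⟩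
  omega

section W
variable {n m : ℕ} (w : Finset (Fin n) → ℝ)

lemma aux_eval (A : Finset (Fin n)) :
    ∑ S ∈ A.powersetCard m, w S
      = ∑ S ∈ (Finset.univ : Finset (Fin n)).powersetCard m, if S ⊆ A then w S else 0 := by
  rw [← Finset.sum_filter]
  congr 1
  ext S
  simp [Finset.mem_powersetCard, Finset.mem_powersetCard_univ, and_comm]

lemma aux_sumX :
    ∑ A : Finset (Fin n), (∑ S ∈ A.powersetCard m, w S)
      = (∑ S ∈ (Finset.univ : Finset (Fin n)).powersetCard m, w S) * 2^(n-m) := by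
  simp_rw [aux_eval w]
  rw [Finset.sum_comm, Finset.sum_mul]
  refine Finset.sum_congr rfl fun S hS => ?_
  rw [Finset.mem_powersetCard_univ] at hS
  calc ∑ A : Finset (Fin n), (if S ⊆ A then w S else 0)
      = ∑ A : Finset (Fin n), w S * (if S ⊆ A then (1:ℝ) else 0) := by
        refine Finset.sum_congr rfl fun A _ => by split_ifs <;> ring
    _ = w S * 2^(n - S.card) := by rw [← Finset.mul_sum, aux_sum_ind]
    _ = w S * 2^(n-m) := by rw [hS]
    _ = (if S ⊆ Finset.univ then w S else 0) * 2^(n-m) := by simp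

lemma aux_sumX2 :
    ∑ A : Finset (Fin n), (∑ S ∈ A.powersetCard m, w S)^2
      = ∑ S ∈ (Finset.univ : Finset (Fin n)).powersetCard m,
          ∑ T ∈ (Finset.univ : Finset (Fin n)).powersetCard m,
            w S * w T * 2^(n - (S ∪ T).card) := by
  simp_rw [aux_eval w, sq, Finset.sum_mul_sum]
  rw [Finset.sum_comm]
  refine Finset.sum_congr rfl fun S hS => ?_
  rw [Finset.sum_comm]
  refine Finset.sum_congr rfl fun T hT => ?_
  calc ∑ A : Finset (Fin n), (if S ⊆ A then w S else 0) * (if T ⊆ A then w T else 0)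
      = ∑ A : Finset (Fin n), (w S * w T) * (if S ∪ T ⊆ A then (1:ℝ) else 0) := by
        refine Finset.sum_congr rfl fun A _ => ?_
        by_cases h1 : S ⊆ A <;> by_cases h2 : T ⊆ A <;>
          simp [h1, h2, Finset.union_subset_iff]
    _ = w S * w T * 2^(n - (S ∪ T).card) := by rw [← Finset.mul_sum, aux_sum_ind]

end W

section NM
variable {n m : ℕ}

-- Sa bound
lemma aux_Sa :
    ∑ S ∈ (Finset.univ : Finset (Fin n)).powersetCard m,
      ∑ T ∈ (Finset.univ : Finset (Fin n)).powersetCard m, ((S ∩ T).card : ℝ)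
    ≤ (n : ℝ) * ((n-1).choose (m-1) : ℝ)^2 := by
  set K := (Finset.univ : Finset (Fin n)).powersetCard m with hK
  have h1 : ∀ S T : Finset (Fin n), ((S ∩ T).card : ℝ)
      = ∑ x : Fin n, (if x ∈ S then (1:ℝ) else 0) * (if x ∈ T then 1 else 0) := by
    intro S T
    have : ∀ x : Fin n, (if x ∈ S then (1:ℝ) else 0) * (if x ∈ T then 1 else 0)
        = if x ∈ S ∩ T then (1:ℝ) else 0 := by
      intro x; by_cases h1 : x ∈ S <;> by_cases h2 : x ∈ T <;> simp [h1, h2]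
    rw [Finset.sum_congr rfl fun x _ => this x, Finset.sum_boole]
    congr 1
    rw [Finset.filter_univ_mem]
  calc ∑ S ∈ K, ∑ T ∈ K, ((S ∩ T).card : ℝ)
      = ∑ x : Fin n, (∑ S ∈ K, if x ∈ S then (1:ℝ) else 0) * (∑ T ∈ K, if x ∈ T then (1:ℝ) else 0) := by
        simp_rw [h1, Finset.sum_mul_sum]
        have e1 : ∀ S : Finset (Fin n),
            (∑ T ∈ K, ∑ x : Fin n, (if x ∈ S then (1:ℝ) else 0) * (if x ∈ T then 1 else 0))
            = ∑ x : Fin n, ∑ T ∈ K, (if x ∈ S then (1:ℝ) else 0) * (if x ∈ T then 1 else 0) :=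
          fun S => Finset.sum_comm
        rw [Finset.sum_congr rfl fun S _ => e1 S]
        exact Finset.sum_comm
    _ ≤ ∑ _x : Fin n, ((n-1).choose (m-1) : ℝ)^2 := by
        refine Finset.sum_le_sum fun x _ => ?_
        have hb : ∑ S ∈ K, (if x ∈ S then (1:ℝ) else 0) = ((K.filter (fun S => x ∈ S)).card : ℝ) := by
          rw [Finset.sum_boole]
        rw [hb, sq]
        have h2 : ((K.filter (fun S => x ∈ S)).card : ℝ) ≤ ((n-1).choose (m-1) : ℝ) := by
          exact_mod_cast aux_count_one x
        have h0 : (0:ℝ) ≤ ((K.filter (fun S => x ∈ S)).card : ℝ) := by positivity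
        exact mul_le_mul h2 h2 h0 (by positivity)
    _ = (n : ℝ) * ((n-1).choose (m-1) : ℝ)^2 := by
        rw [Finset.sum_const, Finset.card_univ, Fintype.card_fin, nsmul_eq_mul]

lemma aux_inter_offdiag (S T : Finset (Fin n)) :
    ((S ∩ T).card : ℝ) * (((S ∩ T).card : ℝ) - 1)
    = ∑ p ∈ (Finset.univ : Finset (Fin n)).offDiag,
        (if p.1 ∈ S ∧ p.2 ∈ S then (1:ℝ) else 0) * (if p.1 ∈ T ∧ p.2 ∈ T then 1 else 0) := by
  have h1 : ∀ p : Fin n × Fin n, (if p.1 ∈ S ∧ p.2 ∈ S then (1:ℝ) else 0) * (if p.1 ∈ T ∧ p.2 ∈ T then 1 else 0)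
      = if (p.1 ∈ S ∧ p.2 ∈ S) ∧ (p.1 ∈ T ∧ p.2 ∈ T) then (1:ℝ) else 0 := by
    intro p
    by_cases h1 : p.1 ∈ S ∧ p.2 ∈ S <;> by_cases h2 : p.1 ∈ T ∧ p.2 ∈ T <;> simp [h1, h2]
  rw [Finset.sum_congr rfl fun p _ => h1 p, Finset.sum_boole]
  have h2 : (Finset.univ : Finset (Fin n)).offDiag.filter
        (fun p => (p.1 ∈ S ∧ p.2 ∈ S) ∧ (p.1 ∈ T ∧ p.2 ∈ T)) = (S ∩ T).offDiag := by
    ext p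
    simp only [Finset.mem_filter, Finset.mem_offDiag, Finset.mem_univ, Finset.mem_inter, true_and]
    tauto
  rw [h2, Finset.offDiag_card]
  have hle : (S ∩ T).card ≤ (S ∩ T).card * (S ∩ T).card := by nlinarith
  push_cast [Nat.cast_sub hle]
  ring

lemma aux_Sb (hm : 1 ≤ m) :
    ∑ S ∈ (Finset.univ : Finset (Fin n)).powersetCard m,
      ∑ T ∈ (Finset.univ : Finset (Fin n)).powersetCard m,
        ((S ∩ T).card : ℝ) * (((S ∩ T).card : ℝ) - 1)
    ≤ (n : ℝ)^2 * (if m = 1 then 0 else ((n-2).choose (m-2) : ℝ))^2 := by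
  set K := (Finset.univ : Finset (Fin n)).powersetCard m with hK
  set D2 : ℝ := if m = 1 then 0 else ((n-2).choose (m-2) : ℝ) with hD2
  have hD2nonneg : 0 ≤ D2 := by rw [hD2]; split_ifs <;> positivity
  calc ∑ S ∈ K, ∑ T ∈ K, ((S ∩ T).card : ℝ) * (((S ∩ T).card : ℝ) - 1)
      = ∑ p ∈ (Finset.univ : Finset (Fin n)).offDiag,
          (∑ S ∈ K, if p.1 ∈ S ∧ p.2 ∈ S then (1:ℝ) else 0)
          * (∑ T ∈ K, if p.1 ∈ T ∧ p.2 ∈ T then (1:ℝ) else 0) := by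
        simp_rw [aux_inter_offdiag, Finset.sum_mul_sum]
        have e1 : ∀ S : Finset (Fin n),
            (∑ T ∈ K, ∑ p ∈ (Finset.univ : Finset (Fin n)).offDiag,
              (if p.1 ∈ S ∧ p.2 ∈ S then (1:ℝ) else 0) * (if p.1 ∈ T ∧ p.2 ∈ T then 1 else 0))
            = ∑ p ∈ (Finset.univ : Finset (Fin n)).offDiag, ∑ T ∈ K,
              (if p.1 ∈ S ∧ p.2 ∈ S then (1:ℝ) else 0) * (if p.1 ∈ T ∧ p.2 ∈ T then 1 else 0) :=
          fun S => Finset.sum_comm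
        rw [Finset.sum_congr rfl fun S _ => e1 S]
        exact Finset.sum_comm
    _ ≤ ∑ _p ∈ (Finset.univ : Finset (Fin n)).offDiag, D2^2 := by
        refine Finset.sum_le_sum fun p hp => ?_
        have hxy : p.1 ≠ p.2 := (Finset.mem_offDiag.1 hp).2.2
        have hb : ∑ S ∈ K, (if p.1 ∈ S ∧ p.2 ∈ S then (1:ℝ) else 0)
            = ((K.filter (fun S => p.1 ∈ S ∧ p.2 ∈ S)).card : ℝ) := by
          rw [Finset.sum_boole]
        have h2 : ((K.filter (fun S => p.1 ∈ S ∧ p.2 ∈ S)).card : ℝ) ≤ D2 := by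
          rw [hD2]
          split_ifs with h
          · rw [aux_count_two_m1 p.1 p.2 hxy h]; norm_num
          · exact_mod_cast aux_count_two p.1 p.2 hxy (by omega)
        rw [hb, sq]
        have h0 : (0:ℝ) ≤ ((K.filter (fun S => p.1 ∈ S ∧ p.2 ∈ S)).card : ℝ) := by positivity
        exact mul_le_mul h2 h2 h0 hD2nonneg
    _ ≤ (n : ℝ)^2 * D2^2 := by
        rw [Finset.sum_const, nsmul_eq_mul]
        have hcard : ((Finset.univ : Finset (Fin n)).offDiag.card : ℝ) ≤ (n:ℝ)^2 := by
          rw [Finset.offDiag_card]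
          have : ((Finset.univ : Finset (Fin n)).card) = n := by simp
          rw [this]
          have h3 : n * n - n ≤ n * n := Nat.sub_le _ _
          calc ((n * n - n : ℕ) : ℝ) ≤ ((n*n : ℕ) : ℝ) := by exact_mod_cast h3
            _ = (n:ℝ)^2 := by push_cast; ring
        exact mul_le_mul_of_nonneg_right hcard (by positivity)

lemma aux_pow_bound (r m : ℕ) (hr : r ≤ m) :
    (2:ℝ)^r - 1 ≤ (r:ℝ) + 2^m * ((r:ℝ) * ((r:ℝ) - 1)) := by
  rcases Nat.lt_or_ge r 2 with h | h
  · interval_cases r <;> norm_num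
  · have h1 : (2:ℝ)^r ≤ 2^m := pow_le_pow_right₀ (by norm_num) hr
    have h3 : (1:ℝ) ≤ (2:ℝ)^m := one_le_pow₀ (by norm_num)
    have h2 : (2:ℝ) ≤ (r:ℝ) := by exact_mod_cast h
    have h5 : (0:ℝ) ≤ ((r:ℝ)-2)*((r:ℝ)+1) := mul_nonneg (by linarith) (by linarith)
    nlinarith [h1, h2, h3, h5]

lemma aux_Fam_pos (n : ℕ) : 0 < (Fam n (1/2)).card := by
  rw [Finset.card_pos]
  exact ⟨∅, by simp [Fam]⟩

lemma aux_Fam_card (n : ℕ) : 2^n ≤ 2 * (Fam n (1/2)).card := by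
  classical
  have h2 := Finset.card_filter_add_card_filter_not
    (s := (Finset.univ : Finset (Finset (Fin n)))) (p := fun A => ((A.card : ℝ) ≤ (1/2) * n))
  have h1 : (Finset.univ : Finset (Finset (Fin n))).card = 2^n := by
    simp [Finset.card_univ]
  have h3 : ((Finset.univ : Finset (Finset (Fin n))).filter
      (fun A => ¬((A.card : ℝ) ≤ (1/2) * n))).card ≤ (Fam n (1/2)).card := by
    apply Finset.card_le_card_of_injOn (fun A => Aᶜ)
    · intro A hA
      simp only [Finset.mem_coe, Finset.mem_filter, Finset.mem_univ, true_and, not_le] at hA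
      simp only [Fam, Finset.mem_coe, Finset.mem_filter, Finset.mem_univ, true_and]
      rw [Finset.card_compl, Fintype.card_fin]
      have hle : A.card ≤ n := by
        have := Finset.card_le_card (Finset.subset_univ A)
        simpa using this
      rw [Nat.cast_sub hle]
      linarith
    · intro A _ B _ h
      exact compl_injective h
  have hFam : (Fam n (1/2)).card = ((Finset.univ : Finset (Finset (Fin n))).filter
      (fun A => ((A.card : ℝ) ≤ (1/2) * n))).card := rfl
  omega

lemma aux_numeric (n m : ℕ) (hm : 1 ≤ m) (hn : 2^(m+1)*m^2 + 2*m + 1 ≤ n) :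
    2 * (((m-1).factorial : ℝ))^2 * ((n:ℝ) * ((n-1).choose (m-1) : ℝ)^2
        + 2^m * ((n:ℝ)^2 * (if m = 1 then 0 else ((n-2).choose (m-2) : ℝ))^2))
    ≤ 7 * (n:ℝ)^(2*m-1) := by
  have hnn : (0:ℝ) ≤ (n:ℝ) := Nat.cast_nonneg n
  -- first part
  have hA : ((m-1).factorial : ℝ) * ((n-1).choose (m-1) : ℝ) ≤ (n:ℝ)^(m-1) := by
    have h1 : (m-1).factorial * (n-1).choose (m-1) ≤ n^(m-1) := by
      rw [← Nat.descFactorial_eq_factorial_mul_choose]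
      exact le_trans (Nat.descFactorial_le_pow _ _) (Nat.pow_le_pow_left (Nat.sub_le n 1) _)
    exact_mod_cast h1
  have e1 : (n:ℝ) * ((n:ℝ)^(m-1))^2 = (n:ℝ)^(2*m-1) := by
    rw [← pow_mul, ← pow_succ']
    congr 1
    omega
  have part1 : 2 * (((m-1).factorial : ℝ))^2 * ((n:ℝ) * ((n-1).choose (m-1) : ℝ)^2)
      ≤ 2 * (n:ℝ)^(2*m-1) := by
    have hsq : (((m-1).factorial : ℝ) * ((n-1).choose (m-1) : ℝ))^2 ≤ ((n:ℝ)^(m-1))^2 := by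
      apply pow_le_pow_left₀ (by positivity) hA
    calc 2 * (((m-1).factorial : ℝ))^2 * ((n:ℝ) * ((n-1).choose (m-1) : ℝ)^2)
        = 2 * (n:ℝ) * ((((m-1).factorial : ℝ)) * ((n-1).choose (m-1) : ℝ))^2 := by ring
      _ ≤ 2 * (n:ℝ) * ((n:ℝ)^(m-1))^2 := by
          apply mul_le_mul_of_nonneg_left hsq (by positivity)
      _ = 2 * (n:ℝ)^(2*m-1) := by rw [mul_assoc, e1]
  -- second part
  have part2 : 2 * (((m-1).factorial : ℝ))^2
      * (2^m * ((n:ℝ)^2 * (if m = 1 then 0 else ((n-2).choose (m-2) : ℝ))^2))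
      ≤ 5 * (n:ℝ)^(2*m-1) := by
    by_cases h : m = 1
    · simp [h]
    · have hm2 : 2 ≤ m := by omega
      have hB : ((m-1).factorial : ℝ) * ((n-2).choose (m-2) : ℝ)
          ≤ ((m:ℝ) - 1) * (n:ℝ)^(m-2) := by
        have h1 : (m-1).factorial * (n-2).choose (m-2) ≤ (m-1) * n^(m-2) := by
          have hf : (m-1).factorial = (m-1) * (m-2).factorial := by
            rw [show m-1 = (m-2)+1 by omega, Nat.factorial_succ]
          rw [hf, mul_assoc, ← Nat.descFactorial_eq_factorial_mul_choose]
          exact Nat.mul_le_mul_left _ (le_trans (Nat.descFactorial_le_pow _ _)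
            (Nat.pow_le_pow_left (Nat.sub_le _ _) _))
        have := h1
        have hcast : (((m-1) : ℕ) : ℝ) = (m:ℝ) - 1 := by
          push_cast [Nat.cast_sub hm]
          ring
        calc ((m-1).factorial : ℝ) * ((n-2).choose (m-2) : ℝ)
            = (((m-1).factorial * (n-2).choose (m-2) : ℕ) : ℝ) := by push_cast; ring
          _ ≤ (((m-1) * n^(m-2) : ℕ) : ℝ) := by exact_mod_cast h1
          _ = ((m:ℝ) - 1) * (n:ℝ)^(m-2) := by push_cast [Nat.cast_sub hm]; ring
      have hsq : (((m-1).factorial : ℝ) * ((n-2).choose (m-2) : ℝ))^2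
          ≤ (((m:ℝ) - 1) * (n:ℝ)^(m-2))^2 := by
        apply pow_le_pow_left₀ (by positivity) hB
      have hnbig : 2^(m+1) * ((m:ℝ) - 1)^2 ≤ (n:ℝ) := by
        have h1 : (2^(m+1) * m^2 : ℕ) ≤ n := by omega
        have h2 : ((2^(m+1) * m^2 : ℕ) : ℝ) ≤ (n:ℝ) := by exact_mod_cast h1
        have h3 : ((m:ℝ) - 1)^2 ≤ (m:ℝ)^2 := by
          have : (0:ℝ) ≤ (m:ℝ) - 1 := by
            have : (1:ℝ) ≤ m := by exact_mod_cast hm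
            linarith
          nlinarith
        push_cast at h2
        nlinarith [pow_pos (by norm_num : (0:ℝ) < 2) (m+1)]
      have e2 : (n:ℝ) * ((n:ℝ)^2 * ((n:ℝ)^(m-2))^2) = (n:ℝ)^(2*m-1) := by
        rw [← pow_mul, ← pow_add]
        rw [show (n:ℝ) * ((n:ℝ)^(2 + (m-2)*2)) = (n:ℝ)^(2+(m-2)*2+1) from (pow_succ' _ _).symm]
        congr 1
        omega
      simp only [if_neg h]
      calc 2 * (((m-1).factorial : ℝ))^2 * (2^m * ((n:ℝ)^2 * ((n-2).choose (m-2) : ℝ)^2))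
          = 2^(m+1) * (n:ℝ)^2 * (((m-1).factorial : ℝ) * ((n-2).choose (m-2) : ℝ))^2 := by
            rw [pow_succ]; ring
        _ ≤ 2^(m+1) * (n:ℝ)^2 * (((m:ℝ) - 1) * (n:ℝ)^(m-2))^2 := by
            apply mul_le_mul_of_nonneg_left hsq (by positivity)
        _ = (2^(m+1) * ((m:ℝ)-1)^2) * ((n:ℝ)^2 * ((n:ℝ)^(m-2))^2) := by ring
        _ ≤ (n:ℝ) * ((n:ℝ)^2 * ((n:ℝ)^(m-2))^2) := by
            apply mul_le_mul_of_nonneg_right hnbig (by positivity)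
        _ = (n:ℝ)^(2*m-1) := e2
        _ ≤ 5 * (n:ℝ)^(2*m-1) := by nlinarith [pow_nonneg hnn (2*m-1)]
  calc 2 * (((m-1).factorial : ℝ))^2 * ((n:ℝ) * ((n-1).choose (m-1) : ℝ)^2
        + 2^m * ((n:ℝ)^2 * (if m = 1 then 0 else ((n-2).choose (m-2) : ℝ))^2))
      = 2 * (((m-1).factorial : ℝ))^2 * ((n:ℝ) * ((n-1).choose (m-1) : ℝ)^2)
        + 2 * (((m-1).factorial : ℝ))^2
          * (2^m * ((n:ℝ)^2 * (if m = 1 then 0 else ((n-2).choose (m-2) : ℝ))^2)) := by ring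
    _ ≤ 2 * (n:ℝ)^(2*m-1) + 5 * (n:ℝ)^(2*m-1) := add_le_add part1 part2
    _ = 7 * (n:ℝ)^(2*m-1) := by ring

end NM

lemma aux_key (n m : ℕ) (hm : 1 ≤ m) (hn : 2^(m+1)*m^2 + 2*m + 1 ≤ n)
    (Mr : ℝ) (hMr : 0 ≤ Mr) (w : Finset (Fin n) → ℝ) (hw0 : ∀ S, 0 ≤ w S)
    (hwM : ∀ S : Finset (Fin n), S.card = m → w S ≤ Mr ^ m) :
    (∑ A ∈ Fam n (1/2), ((∑ S ∈ A.powersetCard m, w S)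
        - (∑ B ∈ Fam n (1/2), ∑ S ∈ B.powersetCard m, w S) / ((Fam n (1/2)).card : ℝ))^2)
      / ((Fam n (1/2)).card : ℝ)
    ≤ 7 * (n:ℝ)^(2*m-1) * Mr^(2*m) / (4^m * ((m-1).factorial : ℝ)^2) := by
  have hmn : 2*m + 1 ≤ n := le_trans (Nat.le_add_left _ _) hn
  set K := (Finset.univ : Finset (Fin n)).powersetCard m with hK
  set W := ∑ S ∈ K, w S with hW
  set c := W / 2^m with hc
  set X : Finset (Fin n) → ℝ := fun A => ∑ S ∈ A.powersetCard m, w S with hX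
  set V := ∑ A : Finset (Fin n), (X A - c)^2 with hV
  have hVnonneg : 0 ≤ V := Finset.sum_nonneg fun A _ => sq_nonneg _
  -- step 1: numerator bounded by V
  have h1 : ∑ A ∈ Fam n (1/2), (X A - (∑ B ∈ Fam n (1/2), X B) / ((Fam n (1/2)).card : ℝ))^2
      ≤ V := by
    refine (aux_mean_min (Fam n (1/2)) X c).trans ?_
    exact Finset.sum_le_sum_of_subset_of_nonneg (Finset.subset_univ _)
      (fun A _ _ => sq_nonneg _)
  -- step 2: V as a double sum
  have hpow2m : (2:ℝ)^(n-m) * 2^m = 2^n := by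
    rw [← pow_add]; congr 1; omega
  have hpow4 : (4:ℝ)^m = 2^m * 2^m := by
    rw [← pow_add, show (4:ℝ) = 2^2 by norm_num, ← pow_mul]; congr 1; omega
  have h2m0 : (2:ℝ)^m ≠ 0 := by positivity
  have h2 : V = ∑ S ∈ K, ∑ T ∈ K, w S * w T * (2^(n - (S ∪ T).card) - 2^n/4^m) := by
    have hexp : V = (∑ A : Finset (Fin n), (X A)^2) - 2*c*(∑ A : Finset (Fin n), X A)
        + (2^n : ℝ) * c^2 := by
      rw [hV]
      have e : ∀ A : Finset (Fin n), (X A - c)^2 = (X A)^2 - 2*c*(X A) + c^2 := fun A => by ring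
      rw [Finset.sum_congr rfl fun A _ => e A, Finset.sum_add_distrib, Finset.sum_sub_distrib,
        ← Finset.mul_sum, Finset.sum_const, Finset.card_univ, nsmul_eq_mul]
      have : (Fintype.card (Finset (Fin n)) : ℝ) = 2^n := by
        rw [Fintype.card_finset, Fintype.card_fin]; push_cast; ring
      rw [this]
    have hsplit : ∑ S ∈ K, ∑ T ∈ K, w S * w T * (2^(n - (S ∪ T).card) - 2^n/4^m)
        = (∑ S ∈ K, ∑ T ∈ K, w S * w T * 2^(n - (S ∪ T).card)) - (2^n/4^m) * W^2 := by
      rw [sq, hW, Finset.sum_mul_sum, Finset.mul_sum, ← Finset.sum_sub_distrib]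
      refine Finset.sum_congr rfl fun S _ => ?_
      rw [Finset.mul_sum, ← Finset.sum_sub_distrib]
      exact Finset.sum_congr rfl fun T _ => by ring
    have hcc : 2*c*(W*2^((n:ℕ)-m)) = 2*(2^n/4^m)*W^2 := by
      rw [hc, hpow4, ← hpow2m]
      field_simp
    have hc2 : (2:ℝ)^n * c^2 = (2^n/4^m)*W^2 := by
      rw [hc, hpow4]
      field_simp
      try ring
      try tauto
    rw [hexp, hX, aux_sumX w, aux_sumX2 w, ← hK, ← hW, hsplit]
    rw [show (∑ S ∈ K, w S) = W from hW.symm] at *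
    linarith [hcc, hc2]
  -- step 3: pointwise bound and summed bound
  have hterm : ∀ S ∈ K, ∀ T ∈ K, w S * w T * (2^(n - (S ∪ T).card) - 2^n/4^m)
      ≤ (2^n/4^m) * Mr^(2*m) * (((S ∩ T).card : ℝ)
          + 2^m * (((S ∩ T).card : ℝ) * (((S ∩ T).card : ℝ) - 1))) := by
    intro S hS T hT
    rw [hK, Finset.mem_powersetCard_univ] at hS hT
    set r := (S ∩ T).card with hr
    have hrm : r ≤ m := hS ▸ Finset.card_le_card Finset.inter_subset_left
    have hun : (S ∪ T).card ≤ n := by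
      have := Finset.card_le_card (Finset.subset_univ (S ∪ T)); simpa using this
    have hur : (S ∪ T).card + r = 2*m := by
      rw [hr, Finset.card_union_add_card_inter, hS, hT]; ring
    have hq : (2:ℝ)^(n - (S ∪ T).card) * 4^m = 2^n * 2^r := by
      rw [show (4:ℝ)^m = 2^(2*m) by rw [show (4:ℝ) = 2^2 by norm_num, ← pow_mul],
        ← pow_add, ← pow_add]
      congr 1
      omega
    have hp : (2:ℝ)^(n - (S ∪ T).card) - 2^n/4^m = (2^n/4^m) * (2^r - 1) := by
      have h4m : (0:ℝ) < 4^m := by positivity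
      field_simp
      linear_combination hq
    have hww : w S * w T ≤ Mr^(2*m) := by
      calc w S * w T ≤ Mr^m * Mr^m :=
            mul_le_mul (hwM S hS) (hwM T hT) (hw0 T) (by positivity)
        _ = Mr^(2*m) := by rw [← pow_add]; congr 1; ring
    have hbound := aux_pow_bound r m hrm
    have hpos : (0:ℝ) ≤ 2^r - 1 := by
      have : (1:ℝ) ≤ 2^r := one_le_pow₀ (by norm_num)
      linarith
    have hfac : (0:ℝ) ≤ 2^n/4^m := by positivity
    have hMr2m : (0:ℝ) ≤ Mr^(2*m) := by positivity
    calc w S * w T * (2^(n - (S ∪ T).card) - 2^n/4^m)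
        = (2^n/4^m) * (w S * w T * (2^r - 1)) := by rw [hp]; ring
      _ ≤ (2^n/4^m) * (Mr^(2*m) * ((r:ℝ) + 2^m * ((r:ℝ)*((r:ℝ)-1)))) := by
          refine mul_le_mul_of_nonneg_left ?_ hfac
          calc w S * w T * (2^r - 1) ≤ Mr^(2*m) * (2^r - 1) :=
                mul_le_mul_of_nonneg_right hww hpos
            _ ≤ Mr^(2*m) * ((r:ℝ) + 2^m * ((r:ℝ)*((r:ℝ)-1))) :=
                mul_le_mul_of_nonneg_left hbound hMr2m
      _ = (2^n/4^m) * Mr^(2*m) * ((r:ℝ) + 2^m * ((r:ℝ)*((r:ℝ)-1))) := by ring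
  have h3 : V ≤ (2^n/4^m) * Mr^(2*m) *
      ((∑ S ∈ K, ∑ T ∈ K, ((S ∩ T).card : ℝ))
        + 2^m * (∑ S ∈ K, ∑ T ∈ K, ((S ∩ T).card : ℝ) * (((S ∩ T).card : ℝ) - 1))) := by
    rw [h2]
    calc ∑ S ∈ K, ∑ T ∈ K, w S * w T * (2^(n - (S ∪ T).card) - 2^n/4^m)
        ≤ ∑ S ∈ K, ∑ T ∈ K, (2^n/4^m) * Mr^(2*m) * (((S ∩ T).card : ℝ)
            + 2^m * (((S ∩ T).card : ℝ) * (((S ∩ T).card : ℝ) - 1))) :=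
          Finset.sum_le_sum fun S hS => Finset.sum_le_sum fun T hT => hterm S hS T hT
      _ = (2^n/4^m) * Mr^(2*m) * ((∑ S ∈ K, ∑ T ∈ K, ((S ∩ T).card : ℝ))
            + 2^m * (∑ S ∈ K, ∑ T ∈ K, ((S ∩ T).card : ℝ) * (((S ∩ T).card : ℝ) - 1))) := by
          have hdist : ∀ (f g : Finset (Fin n) → Finset (Fin n) → ℝ) (C d : ℝ),
              ∑ S ∈ K, ∑ T ∈ K, C * (f S T + d * g S T)
                = C * ((∑ S ∈ K, ∑ T ∈ K, f S T) + d * (∑ S ∈ K, ∑ T ∈ K, g S T)) := by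
            intro f g C d
            have e1 : ∑ S ∈ K, ∑ T ∈ K, C * (f S T + d * g S T)
                = ∑ S ∈ K, ((∑ T ∈ K, C * f S T) + ∑ T ∈ K, (C*d) * g S T) := by
              refine Finset.sum_congr rfl fun S _ => ?_
              rw [← Finset.sum_add_distrib]
              exact Finset.sum_congr rfl fun T _ => by ring
            rw [e1, Finset.sum_add_distrib]
            simp_rw [← Finset.mul_sum]
            ring
          exact hdist (fun S T => ((S ∩ T).card : ℝ))
            (fun S T => ((S ∩ T).card : ℝ) * (((S ∩ T).card : ℝ) - 1)) _ _
  -- step 4: counting bounds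
  set D2 : ℝ := if m = 1 then 0 else ((n-2).choose (m-2) : ℝ) with hD2
  set Q : ℝ := (n:ℝ) * ((n-1).choose (m-1) : ℝ)^2 + 2^m * ((n:ℝ)^2 * D2^2) with hQ
  have h4 : V ≤ (2^n/4^m) * Mr^(2*m) * Q := by
    refine h3.trans ?_
    have hMr2m : (0:ℝ) ≤ Mr^(2*m) := by positivity
    have hfac : (0:ℝ) ≤ 2^n/4^m := by positivity
    refine mul_le_mul_of_nonneg_left ?_ (by positivity)
    rw [hQ]
    refine add_le_add (aux_Sa) (mul_le_mul_of_nonneg_left ?_ (by positivity))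
    exact aux_Sb hm
  -- step 5: assemble with division
  have hNpos : (0:ℝ) < ((Fam n (1/2)).card : ℝ) := by exact_mod_cast aux_Fam_pos n
  have hN2 : (2:ℝ)^n ≤ 2 * ((Fam n (1/2)).card : ℝ) := by exact_mod_cast aux_Fam_card n
  have h2npos : (0:ℝ) < 2^n := by positivity
  have hD2nonneg : 0 ≤ D2 := by
    rw [hD2]; split_ifs <;> positivity
  have hQnonneg : 0 ≤ Q := by
    rw [hQ]
    positivity
  have hnum := aux_numeric n m hm hn
  have hfact : (0:ℝ) < ((m-1).factorial : ℝ) := by exact_mod_cast (m-1).factorial_pos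
  calc (∑ A ∈ Fam n (1/2), (X A - (∑ B ∈ Fam n (1/2), X B) / ((Fam n (1/2)).card : ℝ))^2)
        / ((Fam n (1/2)).card : ℝ)
      ≤ V / ((Fam n (1/2)).card : ℝ) := by
        apply div_le_div_of_nonneg_right h1 hNpos.le
    _ ≤ 2 * V / 2^n := by
        rw [div_le_div_iff₀ hNpos h2npos]
        nlinarith [hVnonneg, hN2]
    _ ≤ 2 * ((2^n/4^m) * Mr^(2*m) * Q) / 2^n := by
        apply div_le_div_of_nonneg_right (by linarith [h4]) h2npos.le
    _ = 2 * Q * (Mr^(2*m) / 4^m) := by field_simp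
    _ ≤ (7 * (n:ℝ)^(2*m-1) / ((m-1).factorial : ℝ)^2) * (Mr^(2*m) / 4^m) := by
        refine mul_le_mul_of_nonneg_right ?_ (by positivity)
        rw [le_div_iff₀ (by positivity)]
        nlinarith [hnum]
    _ = 7 * (n:ℝ)^(2*m-1) * Mr^(2*m) / (4^m * ((m-1).factorial : ℝ)^2) := by
        field_simp
        try exact Or.inl (by ring)

end Aux

theorem stmt7 (k m : ℕ) (hk : 1 ≤ k) (hm : 1 ≤ m) (ε : ℝ) (hε : 0 < ε) :
    ∃ n₀ : ℕ, ∀ n : ℕ, n₀ ≤ n → ∀ M : ℤ, ∀ a : Fin n → Fin k → ℤ,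
      (∀ i j, 0 ≤ a i j ∧ a i j ≤ M) →
      (∀ A₁ A₂ : Finset (Fin n), A₁ ∈ Fam n (1 / 2) → A₂ ∈ Fam n (1 / 2) → A₁ ≠ A₂ →
        m ≤ A₁.card → m ≤ A₂.card → mthEvalVec n k m a A₁ ≠ mthEvalVec n k m a A₂) →
      (∑ A ∈ Fam n (1 / 2), ∑ j, ((mthEvalVec n k m a A j : ℝ) -
          (∑ B ∈ Fam n (1 / 2), (mthEvalVec n k m a B j : ℝ)) / ((Fam n (1 / 2)).card : ℝ)) ^ 2) /
        ((Fam n (1 / 2)).card : ℝ) ≤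
      (1 + ε) * ((k : ℝ) * (2 ^ (2 * m + 1) * (1 / 2 : ℝ) ^ (2 * m - 1) +
          2 ^ (2 * m + 1) * (1 / 2 : ℝ) ^ (2 * m) + 1)) * (n : ℝ) ^ (2 * m - 1) *
        (M : ℝ) ^ (2 * m) / (2 ^ (2 * m) * (((m - 1).factorial : ℝ)) ^ 2) := by
  refine ⟨2^(m+1)*m^2 + 2*m + 1, fun n hn M a ha _hinj => ?_⟩
  have hn1 : 0 < n := lt_of_lt_of_le (Nat.succ_pos _) (le_trans (Nat.le_add_left _ _) hn)
  have hM0 : (0:ℤ) ≤ M := le_trans (ha ⟨0, hn1⟩ ⟨0, hk⟩).1 (ha ⟨0, hn1⟩ ⟨0, hk⟩).2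
  have hMr : (0:ℝ) ≤ (M:ℝ) := by exact_mod_cast hM0
  have hcast : ∀ (j : Fin k) (A : Finset (Fin n)), ((mthEvalVec n k m a A j : ℤ) : ℝ)
      = ∑ S ∈ A.powersetCard m, ∏ i ∈ S, ((a i j : ℤ) : ℝ) := by
    intro j A
    simp only [mthEvalVec]
    push_cast
    rfl
  have key : ∀ j : Fin k,
      (∑ A ∈ Fam n (1/2), ((mthEvalVec n k m a A j : ℝ)
        - (∑ B ∈ Fam n (1/2), (mthEvalVec n k m a B j : ℝ)) / ((Fam n (1/2)).card : ℝ))^2)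
        / ((Fam n (1/2)).card : ℝ)
      ≤ 7 * (n:ℝ)^(2*m-1) * (M:ℝ)^(2*m) / (4^m * ((m-1).factorial : ℝ)^2) := by
    intro j
    simp_rw [hcast j]
    refine aux_key n m hm hn (M:ℝ) hMr (fun S => ∏ i ∈ S, ((a i j : ℤ) : ℝ))
      (fun S => Finset.prod_nonneg fun i _ => by exact_mod_cast (ha i j).1)
      (fun S hS => ?_)
    calc ∏ i ∈ S, ((a i j : ℤ) : ℝ) ≤ ∏ _i ∈ S, (M:ℝ) :=
          Finset.prod_le_prod (fun i _ => by exact_mod_cast (ha i j).1)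
            (fun i _ => by exact_mod_cast (ha i j).2)
      _ = (M:ℝ)^m := by rw [Finset.prod_const, hS]
  have hBnonneg : (0:ℝ) ≤ 7 * (n:ℝ)^(2*m-1) * (M:ℝ)^(2*m) / (4^m * ((m-1).factorial : ℝ)^2) := by
    have hfact : (0:ℝ) < ((m-1).factorial : ℝ) := by exact_mod_cast (m-1).factorial_pos
    have := pow_nonneg hMr (2*m)
    positivity
  calc (∑ A ∈ Fam n (1 / 2), ∑ j, ((mthEvalVec n k m a A j : ℝ) -
          (∑ B ∈ Fam n (1 / 2), (mthEvalVec n k m a B j : ℝ)) / ((Fam n (1 / 2)).card : ℝ)) ^ 2) /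
        ((Fam n (1 / 2)).card : ℝ)
      = ∑ j : Fin k, (∑ A ∈ Fam n (1/2), ((mthEvalVec n k m a A j : ℝ)
          - (∑ B ∈ Fam n (1/2), (mthEvalVec n k m a B j : ℝ)) / ((Fam n (1/2)).card : ℝ))^2)
          / ((Fam n (1/2)).card : ℝ) := by
        rw [Finset.sum_comm, Finset.sum_div]
    _ ≤ ∑ _j : Fin k, 7 * (n:ℝ)^(2*m-1) * (M:ℝ)^(2*m) / (4^m * ((m-1).factorial : ℝ)^2) :=
        Finset.sum_le_sum fun j _ => key j
    _ = (k:ℝ) * (7 * (n:ℝ)^(2*m-1) * (M:ℝ)^(2*m) / (4^m * ((m-1).factorial : ℝ)^2)) := by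
        rw [Finset.sum_const, Finset.card_univ, Fintype.card_fin, nsmul_eq_mul]
    _ ≤ (1 + ε) * ((k : ℝ) * (2 ^ (2 * m + 1) * (1 / 2 : ℝ) ^ (2 * m - 1) +
          2 ^ (2 * m + 1) * (1 / 2 : ℝ) ^ (2 * m) + 1)) * (n : ℝ) ^ (2 * m - 1) *
        (M : ℝ) ^ (2 * m) / (2 ^ (2 * m) * (((m - 1).factorial : ℝ)) ^ 2) := by
        have hconst : (2:ℝ) ^ (2 * m + 1) * (1 / 2 : ℝ) ^ (2 * m - 1) +
            2 ^ (2 * m + 1) * (1 / 2 : ℝ) ^ (2 * m) + 1 = 7 := by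
          have e1 : (2:ℝ)^(2*m+1) = 4 * 2^(2*m-1) := by
            rw [show (4:ℝ) = 2^2 by norm_num, ← pow_add]
            congr 1
            omega
          have e3 : (2:ℝ)^(2*m) = 2^(2*m-1) * 2 := by
            rw [← pow_succ]
            congr 1
            omega
          have h1 : (2:ℝ)^(2*m-1) ≠ 0 := by positivity
          rw [div_pow, div_pow, one_pow, one_pow, e1, e3]
          field_simp
          ring
        have hpow4 : (2:ℝ)^(2*m) = 4^m := by
          rw [pow_mul]
          norm_num
        rw [hconst, hpow4]
        have heq : (k:ℝ) * (7 * (n:ℝ)^(2*m-1) * (M:ℝ)^(2*m) / (4^m * ((m-1).factorial : ℝ)^2))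
            = ((k:ℝ) * (7 * (n:ℝ)^(2*m-1) * (M:ℝ)^(2*m))) / (4^m * ((m-1).factorial : ℝ)^2) := by
          ring
        have heq2 : (1 + ε) * ((k : ℝ) * 7) * (n : ℝ) ^ (2 * m - 1) * (M : ℝ) ^ (2 * m)
              / (4^m * (((m - 1).factorial : ℝ)) ^ 2)
            = ((1 + ε) * ((k : ℝ) * 7) * (n : ℝ) ^ (2 * m - 1) * (M : ℝ) ^ (2 * m))
              / (4^m * (((m - 1).factorial : ℝ)) ^ 2) := rfl
        rw [heq, heq2]
        apply div_le_div_of_nonneg_right _ (by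
          have hfact : (0:ℝ) < ((m-1).factorial : ℝ) := by exact_mod_cast (m-1).factorial_pos
          positivity)
        have hX : (0:ℝ) ≤ (k:ℝ) * (7 * (n:ℝ)^(2*m-1) * (M:ℝ)^(2*m)) := by
          have := pow_nonneg hMr (2*m)
          positivity
        nlinarith [hX, hε]
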